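/- Let D be a k×k Metzler matrix, c > 0, μ < 0, with positive right eigenvector ξ (D ξ = μ ξ) and positive left eigenvector η (ηᵀ D = μ ηᵀ) normalized so that (ξ, η) = 1; let P be the matrix with entries P_{ij} = ξ_i η_j, and assume e^{(D − μ I)s} → P as s → ∞. Let u : [0,∞) → ℝ^k be a nonnegative solution of the cumulant system with u_0 = λ ≥ 0, and let v : [0,∞) → ℝ^k be a differentiable solution of the linearized system dv_t/dt = D v_t − c · u_t ⊙ v_t with v_0 = ξ. Then e^{−μ t} v_t converges as t → ∞ to a limit of the form κ ξ with κ > 0. -/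

import Mathlib

open Filter Topology

section auxmat
attribute [local instance] Matrix.linftyOpNormedAddCommGroup Matrix.linftyOpNormedRing
  Matrix.linftyOpNormedAlgebra

namespace Stmt10Aux

variable {k : ℕ}

/-- `mulVec` as a continuous bilinear map. -/
noncomputable def mulVecCLM (k : ℕ) :
    Matrix (Fin k) (Fin k) ℝ →L[ℝ] (Fin k → ℝ) →L[ℝ] (Fin k → ℝ) :=
  LinearMap.toContinuousLinearMap
  { toFun := fun M => LinearMap.toContinuousLinearMap (Matrix.mulVecLin M)
    map_add' := by
      intro M N; ext x i
      simp [Matrix.add_mulVec]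
    map_smul' := by
      intro r M; ext x i
      simp [Matrix.smul_mulVec] }

@[simp] theorem mulVecCLM_apply (M : Matrix (Fin k) (Fin k) ℝ) (x : Fin k → ℝ) :
    mulVecCLM k M x = M.mulVec x := rfl

noncomputable def E (B : Matrix (Fin k) (Fin k) ℝ) (s : ℝ) : Matrix (Fin k) (Fin k) ℝ :=
  NormedSpace.exp (s • B)

theorem hasDerivAt_E (B : Matrix (Fin k) (Fin k) ℝ) (s : ℝ) :
    HasDerivAt (E B) (E B s * B) s :=
  hasDerivAt_exp_smul_const B s

theorem hasDerivAt_E' (B : Matrix (Fin k) (Fin k) ℝ) (s : ℝ) :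
    HasDerivAt (E B) (B * E B s) s :=
  hasDerivAt_exp_smul_const' B s

theorem continuous_E (B : Matrix (Fin k) (Fin k) ℝ) : Continuous (E B) :=
  continuous_iff_continuousAt.2 fun s => (hasDerivAt_E B s).continuousAt

@[simp] theorem E_zero (B : Matrix (Fin k) (Fin k) ℝ) : E B 0 = 1 := by
  simp [E, NormedSpace.exp_zero]

theorem P_mul_E (B P : Matrix (Fin k) (Fin k) ℝ) (hPB : P * B = 0) (s : ℝ) :
    P * E B s = P := by
  have hder : ∀ r : ℝ, HasDerivAt (fun x => P * E B x) 0 r := by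
    intro r
    have h1 := (hasDerivAt_E' B r).const_mul P
    rwa [← mul_assoc, hPB, zero_mul] at h1
  have hconst := is_const_of_deriv_eq_zero (f := fun x => P * E B x)
    (fun x => (hder x).differentiableAt) (fun x => (hder x).deriv) s 0
  simpa using hconst

theorem E_mulVec (B : Matrix (Fin k) (Fin k) ℝ) (ξ : Fin k → ℝ)
    (hBξ : B.mulVec ξ = 0) (s : ℝ) : (E B s).mulVec ξ = ξ := by
  have hder : ∀ r : ℝ, HasDerivAt (fun x => (E B x).mulVec ξ) 0 r := by
    intro r
    have h1 := ((mulVecCLM k).flip ξ).hasFDerivAt.comp_hasDerivAt r (hasDerivAt_E B r)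
    have h2 : ((mulVecCLM k).flip ξ) (E B r * B) = 0 := by
      show (E B r * B).mulVec ξ = 0
      simp [← Matrix.mulVec_mulVec, hBξ]
    rw [h2] at h1
    exact h1
  have hconst := is_const_of_deriv_eq_zero (f := fun x => (E B x).mulVec ξ)
    (fun x => (hder x).differentiableAt) (fun x => (hder x).deriv) s 0
  simpa [Matrix.one_mulVec] using hconst

theorem var_const (B : Matrix (Fin k) (Fin k) ℝ) (c : ℝ) (w f : ℝ → Fin k → ℝ)
    (hw : ∀ t ∈ Set.Ici (0:ℝ), HasDerivAt w (B.mulVec (w t) - c • f t) t)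
    (hfc : Continuous f)
    {s t : ℝ} (hs : 0 ≤ s) (hst : s ≤ t) :
    w t = (E B (t - s)).mulVec (w s)
      - c • ∫ r in s..t, (E B (t - r)).mulVec (f r) := by
  set F : ℝ → Fin k → ℝ := fun r => (E B (t - r)).mulVec (w r) with hF
  have hFder : ∀ r ∈ Set.uIcc s t,
      HasDerivAt F (-(c • (E B (t - r)).mulVec (f r))) r := by
    intro r hr
    rw [Set.uIcc_of_le hst] at hr
    have hr0 : (0:ℝ) ≤ r := le_trans hs hr.1
    -- derivative of r ↦ E B (t - r)
    have hsub : HasDerivAt (fun r : ℝ => t - r) (-1) r := by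
      simpa using (hasDerivAt_id r).const_sub t
    have hM : HasDerivAt (fun r : ℝ => E B (t - r)) ((-1 : ℝ) • (E B (t - r) * B)) r :=
      (hasDerivAt_E B (t - r)).scomp r hsub
    have hMc : HasDerivAt (fun r : ℝ => mulVecCLM k (E B (t - r)))
        (mulVecCLM k ((-1 : ℝ) • (E B (t - r) * B))) r :=
      (mulVecCLM k).hasFDerivAt.comp_hasDerivAt r hM
    have hprod := hMc.clm_apply (hw r hr0)
    have : mulVecCLM k ((-1 : ℝ) • (E B (t - r) * B)) (w r)
        + mulVecCLM k (E B (t - r)) (B.mulVec (w r) - c • f r)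
        = -(c • (E B (t - r)).mulVec (f r)) := by
      simp only [mulVecCLM_apply, map_smul]
      funext i
      simp [Matrix.mulVec_sub, ← Matrix.mulVec_mulVec, Matrix.smul_mulVec,
        Matrix.mulVec_smul]
      ring
    rw [this] at hprod
    have hFe : (fun y => ((mulVecCLM k) (E B (t - y))) (w y)) = F := by
      funext y; simp [hF]
    rwa [hFe] at hprod
  have hint : IntervalIntegrable (fun r => -(c • (E B (t - r)).mulVec (f r)))
      MeasureTheory.volume s t := by
    apply Continuous.intervalIntegrable
    have hEc : Continuous fun r : ℝ => mulVecCLM k (E B (t - r)) :=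
      (mulVecCLM k).continuous.comp ((continuous_E B).comp (continuous_const.sub continuous_id))
    have : Continuous fun r : ℝ => (E B (t - r)).mulVec (f r) := by
      simpa using hEc.clm_apply hfc
    exact (this.const_smul c).neg
  have hFTC := intervalIntegral.integral_eq_sub_of_hasDerivAt hFder hint
  have hFt : F t = w t := by simp [hF]
  have hFs : F s = (E B (t - s)).mulVec (w s) := rfl
  rw [hFt, hFs] at hFTC
  rw [intervalIntegral.integral_neg, intervalIntegral.integral_smul] at hFTC
  have h2 := eq_sub_iff_add_eq.mp hFTC
  rw [← h2]
  abel


set_option maxHeartbeats 1000000 in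
theorem conv_main (B P : Matrix (Fin k) (Fin k) ℝ) (ξ : Fin k → ℝ)
    (hconv : Tendsto (fun s : ℝ => NormedSpace.exp (s • B)) atTop (𝓝 P))
    (c Cw Mf μ κ : ℝ) (hc : 0 < c) (hCw : 0 ≤ Cw) (hMf : 0 ≤ Mf) (hμ : μ < 0)
    (w f : ℝ → Fin k → ℝ) (h : ℝ → ℝ)
    (hw : ∀ t ∈ Set.Ici (0:ℝ), HasDerivAt w (B.mulVec (w t) - c • f t) t)
    (hfc : Continuous f)
    (hfb : ∀ t ∈ Set.Ici (0:ℝ), ‖f t‖ ≤ Mf * Real.exp (μ * t))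
    (hwb : ∀ t ∈ Set.Ici (0:ℝ), ‖w t‖ ≤ Cw)
    (hPw : ∀ t ∈ Set.Ici (0:ℝ), P.mulVec (w t) = h t • ξ)
    (hh : Tendsto h atTop (𝓝 κ)) :
    Tendsto w atTop (𝓝 (κ • ξ)) := by
  have hconv' : Tendsto (E B) atTop (𝓝 P) := hconv
  -- uniform bound on ‖E B s‖ for s ≥ 0
  obtain ⟨CB, hCBnn, hCB⟩ : ∃ CB : ℝ, 0 ≤ CB ∧ ∀ s : ℝ, 0 ≤ s → ‖E B s‖ ≤ CB := by
    have h0 : Tendsto (fun s => ‖E B s - P‖) atTop (𝓝 ‖P - P‖) :=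
      (hconv'.sub_const P).norm
    rw [sub_self, norm_zero] at h0
    have h1 : ∀ᶠ s in atTop, ‖E B s - P‖ < 1 := h0.eventually_lt_const one_pos
    obtain ⟨s0, hs0⟩ := eventually_atTop.mp h1
    obtain ⟨C1, hC1⟩ := (isCompact_Icc (a := (0:ℝ)) (b := s0)).exists_bound_of_continuousOn
      (continuous_E B).continuousOn
    refine ⟨max C1 (‖P‖ + 1), le_trans (by positivity) (le_max_right _ _), fun s hs => ?_⟩
    rcases le_total s s0 with hle | hle
    · exact le_trans (hC1 s ⟨hs, hle⟩) (le_max_left _ _)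
    · have h2 : ‖E B s‖ ≤ ‖E B s - P‖ + ‖P‖ := by
        simpa using norm_add_le (E B s - P) P
      have h3 := (hs0 s hle).le
      exact le_trans (by linarith) (le_max_right _ _)
  -- bound on the integral term
  have hIbound : ∀ s t : ℝ, 0 ≤ s → s ≤ t →
      ‖∫ r in s..t, (E B (t - r)).mulVec (f r)‖
        ≤ CB * Mf * (Real.exp (μ * s) / (-μ)) := by
    intro s t hs hst
    have hgc : Continuous fun r : ℝ => (E B (t - r)).mulVec (f r) := by
      have hEc : Continuous fun r : ℝ => mulVecCLM k (E B (t - r)) :=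
        (mulVecCLM k).continuous.comp
          ((continuous_E B).comp (continuous_const.sub continuous_id))
      simpa using hEc.clm_apply hfc
    have h1 : ‖∫ r in s..t, (E B (t - r)).mulVec (f r)‖
        ≤ ∫ r in s..t, ‖(E B (t - r)).mulVec (f r)‖ :=
      intervalIntegral.norm_integral_le_integral_norm hst
    have h2 : (∫ r in s..t, ‖(E B (t - r)).mulVec (f r)‖)
        ≤ ∫ r in s..t, CB * Mf * Real.exp (μ * r) := by
      apply intervalIntegral.integral_mono_on hst
      · exact hgc.norm.intervalIntegrable _ _
      · exact (Continuous.intervalIntegrable (by continuity) _ _)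
      · intro r hr
        have hr0 : (0:ℝ) ≤ r := le_trans hs hr.1
        calc ‖(E B (t - r)).mulVec (f r)‖ ≤ ‖E B (t - r)‖ * ‖f r‖ :=
              Matrix.linfty_opNorm_mulVec _ _
          _ ≤ CB * (Mf * Real.exp (μ * r)) := by
              apply mul_le_mul (hCB _ (by linarith [hr.2])) (hfb r hr0)
                (norm_nonneg _) hCBnn
          _ = CB * Mf * Real.exp (μ * r) := by ring
    have hanti : ∀ r : ℝ, HasDerivAt (fun x : ℝ => Real.exp (μ * x) / μ)
        (Real.exp (μ * r)) r := by
      intro r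
      have h4 := (Real.hasDerivAt_exp (μ * r)).comp r ((hasDerivAt_id r).const_mul μ)
      have h5 := h4.div_const μ
      have hμ0 : μ ≠ 0 := ne_of_lt hμ
      refine h5.congr_deriv ?_
      field_simp
    have h3 : (∫ r in s..t, Real.exp (μ * r))
        = Real.exp (μ * t) / μ - Real.exp (μ * s) / μ := by
      apply intervalIntegral.integral_eq_sub_of_hasDerivAt
        (fun r _ => hanti r)
      exact (Continuous.intervalIntegrable (by continuity) _ _)
    have h4 : (∫ r in s..t, CB * Mf * Real.exp (μ * r))
        = CB * Mf * (Real.exp (μ * t) / μ - Real.exp (μ * s) / μ) := by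
      rw [intervalIntegral.integral_const_mul, h3]
    have h5 : CB * Mf * (Real.exp (μ * t) / μ - Real.exp (μ * s) / μ)
        ≤ CB * Mf * (Real.exp (μ * s) / (-μ)) := by
      apply mul_le_mul_of_nonneg_left _ (by positivity)
      have hμinv : μ⁻¹ < 0 := inv_lt_zero.mpr hμ
      have hkey : 0 < Real.exp (μ * t) * (-μ⁻¹) :=
        mul_pos (Real.exp_pos _) (by linarith)
      simp only [div_eq_mul_inv, inv_neg]
      nlinarith
    rw [h4] at h2
    linarith [h1, h2, h5]
  -- epsilon argument
  rw [Metric.tendsto_atTop]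
  intro ε hε
  set δ1 : ℝ := ε / (3 * (Cw + 1)) with hδ1
  have hδ1pos : 0 < δ1 := by positivity
  set δ2 : ℝ := ε / (3 * (‖ξ‖ + 1)) with hδ2
  have hδ2pos : 0 < δ2 := by positivity
  -- choose s
  have hev1 : ∀ᶠ s in atTop, |h s - κ| < δ2 := by
    have h0 : Tendsto (fun s => |h s - κ|) atTop (𝓝 |κ - κ|) := (hh.sub_const κ).abs
    rw [sub_self, abs_zero] at h0
    exact h0.eventually_lt_const hδ2pos
  have hev2 : ∀ᶠ s in atTop, c * (CB * Mf * (Real.exp (μ * s) / (-μ))) < ε / 3 := by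
    have hexp : Tendsto (fun s : ℝ => Real.exp (μ * s)) atTop (𝓝 0) :=
      Real.tendsto_exp_atBot.comp (tendsto_id.const_mul_atTop_of_neg hμ)
    have : Tendsto (fun s : ℝ => c * (CB * Mf * (Real.exp (μ * s) / (-μ))))
        atTop (𝓝 0) := by
      have := ((hexp.div_const (-μ)).const_mul (CB * Mf)).const_mul c
      simpa using this
    exact this.eventually_lt_const (by positivity)
  obtain ⟨s, hs1, hs2, hs0⟩ :
      ∃ s : ℝ, |h s - κ| < δ2 ∧ c * (CB * Mf * (Real.exp (μ * s) / (-μ))) < ε / 3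
        ∧ 0 ≤ s := by
    obtain ⟨s, ⟨h1, h2⟩, h3⟩ := ((hev1.and hev2).and (eventually_ge_atTop (0:ℝ))).exists
    exact ⟨s, h1, h2, h3⟩
  obtain ⟨N, hN⟩ := Metric.tendsto_atTop.mp hconv' δ1 hδ1pos
  refine ⟨max (N + s) s, fun t ht => ?_⟩
  have hts : s ≤ t := le_trans (le_max_right _ _) ht
  have ht0 : (0:ℝ) ≤ t := le_trans hs0 hts
  have htsN : N ≤ t - s := by
    have := le_trans (le_max_left _ _) ht
    linarith
  have hEP : ‖E B (t - s) - P‖ < δ1 := by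
    have := hN (t - s) htsN
    rwa [dist_eq_norm] at this
  have hvc := var_const B c w f hw hfc hs0 hts
  have hPws := hPw s hs0
  set I := ∫ r in s..t, (E B (t - r)).mulVec (f r) with hI
  have hdecomp : w t - κ • ξ =
      (E B (t - s) - P).mulVec (w s) + (h s - κ) • ξ - c • I := by
    rw [hvc, Matrix.sub_mulVec, hPws, sub_smul]
    abel
  have hδeq1 : δ1 * (Cw + 1) = ε / 3 := by
    rw [hδ1]; field_simp
  have hδeq2 : δ2 * (‖ξ‖ + 1) = ε / 3 := by
    rw [hδ2]; field_simp
  have hn1 : ‖(E B (t - s) - P).mulVec (w s)‖ < ε / 3 := by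
    calc ‖(E B (t - s) - P).mulVec (w s)‖ ≤ ‖E B (t - s) - P‖ * ‖w s‖ :=
          Matrix.linfty_opNorm_mulVec _ _
      _ ≤ ‖E B (t - s) - P‖ * Cw := by
          exact mul_le_mul_of_nonneg_left (hwb s hs0) (norm_nonneg _)
      _ < δ1 * (Cw + 1) := by nlinarith [norm_nonneg (E B (t - s) - P)]
      _ = ε / 3 := hδeq1
  have hn2 : ‖(h s - κ) • ξ‖ < ε / 3 := by
    rw [norm_smul, Real.norm_eq_abs]
    calc |h s - κ| * ‖ξ‖ ≤ |h s - κ| * (‖ξ‖ + 1) := by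
          exact mul_le_mul_of_nonneg_left (by linarith) (abs_nonneg _)
      _ < δ2 * (‖ξ‖ + 1) := by nlinarith [norm_nonneg ξ]
      _ = ε / 3 := hδeq2
  have hn3 : ‖c • I‖ < ε / 3 := by
    rw [norm_smul, Real.norm_eq_abs, abs_of_pos hc]
    calc c * ‖I‖ ≤ c * (CB * Mf * (Real.exp (μ * s) / (-μ))) :=
          mul_le_mul_of_nonneg_left (hIbound s t hs0 hts) hc.le
      _ < ε / 3 := hs2
  have : dist (w t) (κ • ξ) = ‖w t - κ • ξ‖ := dist_eq_norm _ _
  rw [this, hdecomp]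
  calc ‖(E B (t - s) - P).mulVec (w s) + (h s - κ) • ξ - c • I‖
      ≤ ‖(E B (t - s) - P).mulVec (w s) + (h s - κ) • ξ‖ + ‖c • I‖ := norm_sub_le _ _
    _ ≤ ‖(E B (t - s) - P).mulVec (w s)‖ + ‖(h s - κ) • ξ‖ + ‖c • I‖ := by
        linarith [norm_add_le ((E B (t - s) - P).mulVec (w s)) ((h s - κ) • ξ)]
    _ < ε := by linarith


end Stmt10Aux
end auxmat

theorem stmt10_pos (k : ℕ) (D : Matrix (Fin k) (Fin k) ℝ)
    (hM : ∀ i j : Fin k, i ≠ j → 0 ≤ D i j)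
    (g v : ℝ → Fin k → ℝ)
    (hgc : ∀ i : Fin k, Continuous (fun s => g s i))
    (hv : ∀ t ∈ Set.Ici (0:ℝ), ∀ i : Fin k, HasDerivAt (fun s => v s i)
      ((D.mulVec (v t)) i - g t i * v t i) t)
    (hv0 : ∀ i, 0 < v 0 i) :
    ∀ t ∈ Set.Ici (0:ℝ), ∀ i, 0 ≤ v t i := by
  by_contra hcon
  push_neg at hcon
  obtain ⟨t1, ht1, i1, hi1⟩ := hcon
  have hvc : ∀ i : Fin k, ∀ t ∈ Set.Ici (0:ℝ), ContinuousAt (fun s => v s i) t :=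
    fun i t ht => (hv t ht i).continuousAt
  have hvcOn : ∀ (i : Fin k) (x : ℝ), 0 ≤ x → ContinuousOn (fun s => v s i)
      (Set.Icc 0 x) :=
    fun i x hx => fun r hr => ((hvc i r hr.1).continuousWithinAt)
  -- the set of zeros in [0, t1]
  set S : Set ℝ := ⋃ i : Fin k, {t | t ∈ Set.Icc (0:ℝ) t1 ∧ v t i = 0} with hS
  have hSsub : S ⊆ Set.Icc 0 t1 := by
    intro x hx
    obtain ⟨i, hi⟩ := Set.mem_iUnion.mp hx
    exact hi.1
  have hne : S.Nonempty := by
    have h0 : (0:ℝ) ∈ Set.Icc (v t1 i1) (v 0 i1) := ⟨hi1.le, (hv0 i1).le⟩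
    obtain ⟨x, hx, hvx⟩ := intermediate_value_Icc' ht1 (hvcOn i1 t1 ht1) h0
    exact ⟨x, Set.mem_iUnion.mpr ⟨i1, hx, hvx⟩⟩
  have hcl : IsClosed S := by
    apply isClosed_iUnion_of_finite
    intro i
    have : {t | t ∈ Set.Icc (0:ℝ) t1 ∧ v t i = 0}
        = Set.Icc (0:ℝ) t1 ∩ (fun t => v t i) ⁻¹' {0} := by
      ext x
      simp only [Set.mem_setOf_eq, Set.mem_inter_iff, Set.mem_preimage,
        Set.mem_singleton_iff]
    rw [this]
    exact (hvcOn i t1 ht1).preimage_isClosed_of_isClosed isClosed_Icc isClosed_singleton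
  have hbdd : BddBelow S := ⟨0, fun x hx => (hSsub hx).1⟩
  set T := sInf S with hT
  have hTS : T ∈ S := hcl.csInf_mem hne hbdd
  have hT0 : 0 ≤ T := (hSsub hTS).1
  have hTt1 : T ≤ t1 := (hSsub hTS).2
  obtain ⟨i0, hi0mem⟩ := Set.mem_iUnion.mp hTS
  have hi0 : v T i0 = 0 := hi0mem.2
  -- nonnegativity on [0, T]
  have hnonneg : ∀ s ∈ Set.Icc (0:ℝ) T, ∀ j, 0 ≤ v s j := by
    intro s hs j
    by_contra hneg
    push_neg at hneg
    have h0 : (0:ℝ) ∈ Set.Icc (v s j) (v 0 j) := ⟨hneg.le, (hv0 j).le⟩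
    obtain ⟨x, hx, hvx⟩ := intermediate_value_Icc' hs.1 (hvcOn j s hs.1) h0
    have hxS : x ∈ S := Set.mem_iUnion.mpr ⟨j, ⟨hx.1, le_trans hx.2 (le_trans hs.2 hTt1)⟩, hvx⟩
    have hTx : T ≤ x := csInf_le hbdd hxS
    have hxs : x = s := le_antisymm hx.2 (le_trans hs.2 hTx)
    rw [hxs] at hvx
    linarith
  -- integrating factor
  set a : ℝ → ℝ := fun r => D i0 i0 - g r i0 with ha
  have hac : Continuous a := continuous_const.sub (hgc i0)
  set A : ℝ → ℝ := fun r => ∫ x in (0:ℝ)..r, a x with hA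
  have hAder : ∀ r : ℝ, HasDerivAt A (a r) r := by
    intro r
    exact intervalIntegral.integral_hasDerivAt_right
      (hac.intervalIntegrable _ _)
      (hac.stronglyMeasurableAtFilter _ _)
      hac.continuousAt
  set G : ℝ → ℝ := fun r => v r i0 * Real.exp (-A r) with hG
  have hGder : ∀ r ∈ Set.Ici (0:ℝ), HasDerivAt G
      (((D.mulVec (v r)) i0 - D i0 i0 * v r i0) * Real.exp (-A r)) r := by
    intro r hr
    have h1 : HasDerivAt (fun x => Real.exp (-A x)) (Real.exp (-A r) * (-(a r))) r := by
      have := (Real.hasDerivAt_exp (-A r)).comp r (hAder r).neg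
      simpa [Function.comp_def] using this
    have h2 := (hv r hr i0).mul h1
    refine h2.congr_deriv ?_
    simp only [ha]
    ring
  have hGmono : MonotoneOn G (Set.Icc 0 T) := by
    apply monotoneOn_of_deriv_nonneg (convex_Icc 0 T)
    · intro r hr
      exact ((hGder r hr.1).continuousAt).continuousWithinAt
    · intro r hr
      rw [interior_Icc] at hr
      exact ((hGder r hr.1.le).differentiableAt).differentiableWithinAt
    · intro r hr
      rw [interior_Icc] at hr
      rw [(hGder r hr.1.le).deriv]
      apply mul_nonneg _ (Real.exp_pos _).le
      have hsum : (D.mulVec (v r)) i0 - D i0 i0 * v r i0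
          = ∑ j ∈ Finset.univ.erase i0, D i0 j * v r j := by
        rw [Matrix.mulVec, dotProduct]
        rw [← Finset.sum_erase_add Finset.univ _ (Finset.mem_univ i0)]
        ring
      rw [hsum]
      apply Finset.sum_nonneg
      intro j hj
      have hji : j ≠ i0 := Finset.ne_of_mem_erase hj
      exact mul_nonneg (hM i0 j (Ne.symm hji)) (hnonneg r ⟨hr.1.le, hr.2.le⟩ j)
  have hG0 : G 0 = v 0 i0 := by
    simp [hG, hA]
  have hGT : G T = 0 := by simp [hG, hi0]
  have := hGmono (Set.left_mem_Icc.mpr hT0) (Set.right_mem_Icc.mpr hT0) hT0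
  rw [hG0, hGT] at this
  linarith [hv0 i0]

theorem stmt10_contmax {f : ℝ → ℝ} (hf : ∀ t ∈ Set.Ici (0:ℝ), ContinuousAt f t) :
    Continuous fun t => f (max t 0) := by
  rw [continuous_iff_continuousAt]
  intro t
  have h1 : ContinuousAt f (max t 0) := hf _ (le_max_right t 0)
  exact ContinuousAt.comp (g := f) h1 ((continuous_id.max continuous_const).continuousAt)

set_option maxHeartbeats 1000000 in
/-- (From the proof of Theorem 3.4 (b) of the paper.) In the subcritical
case `μ < 0`, with positive right/left eigenvectors `ξ, η` of `D`, `(ξ,η) = 1`,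
`P = ξ ηᵀ` and `e^{(D−μI)s} → P` as `s → ∞`, if `u` is a nonnegative solution of the
cumulant system and `v` solves the linearized system `dv_t/dt = D v_t − c u_t ⊙ v_t`
with `v_0 = ξ`, then `e^{−μt} v_t` converges as `t → ∞` to `κ ξ` for some `κ > 0`. -/
theorem stmt10 (k : ℕ) (hk : 1 ≤ k) (c : ℝ) (hc : 0 < c)
    (D : Matrix (Fin k) (Fin k) ℝ)
    (hMetzler : ∀ i j : Fin k, i ≠ j → 0 ≤ D i j)
    (μ : ℝ) (hμ : μ < 0)
    (ξ η : Fin k → ℝ) (hξpos : ∀ i, 0 < ξ i) (hηpos : ∀ i, 0 < η i)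
    (hright : D.mulVec ξ = μ • ξ) (hleft : D.vecMul η = μ • η)
    (hnormal : ∑ i, ξ i * η i = 1)
    (P : Matrix (Fin k) (Fin k) ℝ) (hP : ∀ i j, P i j = ξ i * η j)
    (hconv : Tendsto
      (fun s : ℝ => NormedSpace.exp (s • (D - μ • (1 : Matrix (Fin k) (Fin k) ℝ))))
      atTop (𝓝 P))
    (lam : Fin k → ℝ) (hlam : ∀ i, 0 ≤ lam i)
    (u : ℝ → Fin k → ℝ)
    (husol : ∀ t ∈ Set.Ici (0 : ℝ),
      HasDerivAt u (D.mulVec (u t) - (c / 2) • (u t * u t)) t)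
    (hunonneg : ∀ t ∈ Set.Ici (0 : ℝ), ∀ i : Fin k, 0 ≤ u t i)
    (huinit : u 0 = lam)
    (v : ℝ → Fin k → ℝ)
    (hvsol : ∀ t ∈ Set.Ici (0 : ℝ),
      HasDerivAt v (D.mulVec (v t) - c • (u t * v t)) t)
    (hvinit : v 0 = ξ) :
    ∃ κ : ℝ, 0 < κ ∧
      Tendsto (fun t : ℝ => Real.exp (-(μ * t)) • v t) atTop (𝓝 (κ • ξ)) := by
  have hkne : Nonempty (Fin k) := ⟨⟨0, hk⟩⟩
  -- componentwise derivatives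
  have hui : ∀ t ∈ Set.Ici (0:ℝ), ∀ i : Fin k, HasDerivAt (fun s => u s i)
      ((D.mulVec (u t)) i - (c / 2) * (u t i * u t i)) t := by
    intro t ht i
    have := (hasDerivAt_pi.mp (husol t ht)) i
    simpa [Pi.sub_apply, Pi.smul_apply, Pi.mul_apply, smul_eq_mul] using this
  have hvi : ∀ t ∈ Set.Ici (0:ℝ), ∀ i : Fin k, HasDerivAt (fun s => v s i)
      ((D.mulVec (v t)) i - c * (u t i * v t i)) t := by
    intro t ht i
    have := (hasDerivAt_pi.mp (hvsol t ht)) i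
    simpa [Pi.sub_apply, Pi.smul_apply, Pi.mul_apply, smul_eq_mul] using this
  have hucont : ∀ i : Fin k, Continuous (fun t => u (max t 0) i) := by
    intro i
    exact stmt10_contmax (fun t ht => (hui t ht i).continuousAt)
  have hvcont : ∀ i : Fin k, Continuous (fun t => v (max t 0) i) := by
    intro i
    exact stmt10_contmax (fun t ht => (hvi t ht i).continuousAt)
  -- the dot product identity
  have hkey : ∀ x : Fin k → ℝ, ∑ i, η i * (D.mulVec x) i = μ * ∑ i, η i * x i := by
    intro x
    have h1 : dotProduct η (D.mulVec x) = dotProduct (D.vecMul η) x :=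
      Matrix.dotProduct_mulVec η D x
    rw [hleft] at h1
    simpa [dotProduct, Finset.mul_sum, mul_assoc] using h1
  -- q := ∑ η u and its exponential bound
  have hqder : ∀ t ∈ Set.Ici (0:ℝ), HasDerivAt (fun s => ∑ i, η i * u s i)
      (μ * (∑ i, η i * u t i) - (c/2) * ∑ i, η i * (u t i * u t i)) t := by
    intro t ht
    have h1 : HasDerivAt (fun s => ∑ i, η i * u s i)
        (∑ i, η i * ((D.mulVec (u t)) i - (c / 2) * (u t i * u t i))) t :=
      HasDerivAt.fun_sum (fun i _ => (hui t ht i).const_mul (η i))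
    have h2 : ∑ i, η i * ((D.mulVec (u t)) i - (c / 2) * (u t i * u t i))
        = μ * (∑ i, η i * u t i) - (c/2) * ∑ i, η i * (u t i * u t i) := by
      simp only [mul_sub]
      rw [Finset.sum_sub_distrib, hkey (u t)]
      congr 1
      rw [Finset.mul_sum]
      apply Finset.sum_congr rfl
      intro i _
      ring
    rwa [h2] at h1
  have hqnn : ∀ t ∈ Set.Ici (0:ℝ), 0 ≤ ∑ i, η i * u t i := by
    intro t ht
    exact Finset.sum_nonneg fun i _ => mul_nonneg (hηpos i).le (hunonneg t ht i)
  have hexpder : ∀ s : ℝ, HasDerivAt (fun x : ℝ => Real.exp (-(μ * x)))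
      (-μ * Real.exp (-(μ * s))) s := by
    intro s
    have h1 := (Real.hasDerivAt_exp (-(μ * s))).comp s
      (((hasDerivAt_id s).const_mul μ).neg)
    simpa [mul_comm, Function.comp_def] using h1
  have hqb : ∀ t ∈ Set.Ici (0:ℝ),
      (∑ i, η i * u t i) ≤ (∑ i, η i * u 0 i) * Real.exp (μ * t) := by
    intro t ht
    have hrder : ∀ s ∈ Set.Ici (0:ℝ),
        HasDerivAt (fun x => Real.exp (-(μ * x)) * ∑ i, η i * u x i)
        (Real.exp (-(μ * s)) * (-(c/2) * ∑ i, η i * (u s i * u s i))) s := by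
      intro s hs
      have h1 := (hexpder s).mul (hqder s hs)
      refine h1.congr_deriv ?_
      ring
    have hanti : AntitoneOn (fun x => Real.exp (-(μ * x)) * ∑ i, η i * u x i)
        (Set.Ici (0:ℝ)) := by
      apply antitoneOn_of_deriv_nonpos (convex_Ici 0)
      · intro s hs; exact ((hrder s hs).continuousAt).continuousWithinAt
      · intro s hs
        rw [interior_Ici] at hs
        exact ((hrder s (Set.mem_Ioi.mp hs).le).differentiableAt).differentiableWithinAt
      · intro s hs
        rw [interior_Ici] at hs
        rw [(hrder s (Set.mem_Ioi.mp hs).le).deriv]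
        have hsum : 0 ≤ ∑ i, η i * (u s i * u s i) :=
          Finset.sum_nonneg fun i _ => mul_nonneg (hηpos i).le
            (mul_nonneg (hunonneg s (Set.mem_Ioi.mp hs).le i) (hunonneg s (Set.mem_Ioi.mp hs).le i))
        have hb : -(c/2) * ∑ i, η i * (u s i * u s i) ≤ 0 := by
          nlinarith [mul_nonneg (by linarith : (0:ℝ) ≤ c/2) hsum]
        exact mul_nonpos_iff.mpr (Or.inl ⟨(Real.exp_pos _).le, hb⟩)
    have h3 := hanti Set.self_mem_Ici ht ht
    simp only [mul_zero, neg_zero, Real.exp_zero, one_mul] at h3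
    have h5 : Real.exp (-(μ * t)) * Real.exp (μ * t) = 1 := by
      rw [← Real.exp_add]; simp
    have h6 := mul_le_mul_of_nonneg_right h3 (Real.exp_pos (μ * t)).le
    calc (∑ i, η i * u t i)
        = Real.exp (-(μ * t)) * (∑ i, η i * u t i) * Real.exp (μ * t) := by
          rw [mul_comm (Real.exp (-(μ * t))), mul_assoc, h5, mul_one]
      _ ≤ (∑ i, η i * u 0 i) * Real.exp (μ * t) := h6
  -- nonnegativity of v
  have hvnn : ∀ t ∈ Set.Ici (0:ℝ), ∀ i, 0 ≤ v t i := by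
    apply stmt10_pos k D hMetzler (fun t i => c * u (max t 0) i) v
    · intro i
      exact continuous_const.mul (hucont i)
    · intro t ht i
      have h1 := hvi t ht i
      rw [max_eq_left (Set.mem_Ici.mp ht)]
      convert h1 using 1
      ring
    · intro i
      rw [hvinit]; exact hξpos i
  -- minimum of η
  have huniv : (Finset.univ : Finset (Fin k)).Nonempty := Finset.univ_nonempty
  set ηm : ℝ := Finset.univ.inf' huniv η with hηmdef
  have hηmpos : 0 < ηm := by
    rw [hηmdef, Finset.lt_inf'_iff]
    exact fun i _ => hηpos i
  have hηmle : ∀ i, ηm ≤ η i := fun i => Finset.inf'_le η (Finset.mem_univ i)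
  -- rescaled solution W and inhomogeneity F
  set W : ℝ → Fin k → ℝ := fun t => Real.exp (-(μ * t)) • v t with hWdef
  set F : ℝ → Fin k → ℝ := fun t => u (max t 0) * W (max t 0) with hFdef
  have hWapp : ∀ t i, W t i = Real.exp (-(μ * t)) * v t i := fun t i => rfl
  have hFapp : ∀ t i, F t i = u (max t 0) i * W (max t 0) i := fun t i => rfl
  have hWnn : ∀ t ∈ Set.Ici (0:ℝ), ∀ i, 0 ≤ W t i := by
    intro t ht i
    rw [hWapp]
    exact mul_nonneg (Real.exp_pos _).le (hvnn t ht i)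
  have hFnn : ∀ t : ℝ, ∀ i, 0 ≤ F t i := by
    intro t i
    rw [hFapp]
    exact mul_nonneg (hunonneg _ (le_max_right t 0) i) (hWnn _ (le_max_right t 0) i)
  set B : Matrix (Fin k) (Fin k) ℝ := D - μ • 1 with hBdef
  have hBmv : ∀ x : Fin k → ℝ, ∀ i, (B.mulVec x) i = (D.mulVec x) i - μ * x i := by
    intro x i
    rw [hBdef, Matrix.sub_mulVec, Matrix.smul_mulVec, Matrix.one_mulVec]
    simp [Pi.sub_apply]
  have hWder : ∀ t ∈ Set.Ici (0:ℝ), HasDerivAt W (B.mulVec (W t) - c • F t) t := by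
    intro t ht
    have h2 := HasDerivAt.smul (hexpder t) (hvsol t ht)
    have hval : Real.exp (-(μ * t)) • (D.mulVec (v t) - c • (u t * v t))
        + (-μ * Real.exp (-(μ * t))) • v t
        = B.mulVec (W t) - c • F t := by
      funext i
      simp only [Pi.add_apply, Pi.sub_apply, Pi.smul_apply, smul_eq_mul, Pi.mul_apply,
        hBmv, hFapp, max_eq_left (Set.mem_Ici.mp ht)]
      have hDW : (D.mulVec (W t)) i = Real.exp (-(μ * t)) * (D.mulVec (v t)) i := by
        have hWt : W t = Real.exp (-(μ * t)) • v t := rfl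
        rw [hWt, Matrix.mulVec_smul]
        simp
      rw [hDW]
      simp only [hWapp]
      ring
    rw [← hval]
    exact h2
  have hWi : ∀ t ∈ Set.Ici (0:ℝ), ∀ i, HasDerivAt (fun s => W s i)
      ((B.mulVec (W t)) i - c * F t i) t := by
    intro t ht i
    have := (hasDerivAt_pi.mp (hWder t ht)) i
    simpa [Pi.sub_apply, Pi.smul_apply, smul_eq_mul] using this
  -- continuity of F
  have hFc : Continuous F := by
    apply continuous_pi
    intro i
    have h1 : Continuous fun t : ℝ => Real.exp (-(μ * max t 0)) :=
      Real.continuous_exp.comp ((continuous_const.mul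
        (continuous_id.max continuous_const)).neg)
    have h2 : Continuous fun t : ℝ => F t i := by
      simp only [hFapp, hWapp]
      exact (hucont i).mul (h1.mul (hvcont i))
    exact h2
  -- the scalar function h t = ∑ η_i W_i
  have hPW : ∀ t ∈ Set.Ici (0:ℝ), P.mulVec (W t) = (∑ i, η i * W t i) • ξ := by
    intro t ht
    funext j
    simp only [Matrix.mulVec, dotProduct, hP, Pi.smul_apply, smul_eq_mul]
    rw [Finset.sum_mul]
    apply Finset.sum_congr rfl
    intro l _
    ring
  have hhder : ∀ t ∈ Set.Ici (0:ℝ), HasDerivAt (fun s => ∑ i, η i * W s i)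
      (-(c * ∑ i, η i * F t i)) t := by
    intro t ht
    have h1 : HasDerivAt (fun s => ∑ i, η i * W s i)
        (∑ i, η i * ((B.mulVec (W t)) i - c * F t i)) t :=
      HasDerivAt.fun_sum fun i _ => (hWi t ht i).const_mul (η i)
    have h2 : ∑ i, η i * ((B.mulVec (W t)) i - c * F t i)
        = -(c * ∑ i, η i * F t i) := by
      calc ∑ i, η i * ((B.mulVec (W t)) i - c * F t i)
          = (∑ i, η i * (D.mulVec (W t)) i) - μ * (∑ i, η i * W t i)
            - c * (∑ i, η i * F t i) := by
            rw [Finset.mul_sum, Finset.mul_sum, ← Finset.sum_sub_distrib,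
              ← Finset.sum_sub_distrib]
            apply Finset.sum_congr rfl
            intro i _
            rw [hBmv]
            ring
        _ = -(c * ∑ i, η i * F t i) := by rw [hkey (W t)]; ring
    rwa [h2] at h1
  have hh0 : (∑ i, η i * W 0 i) = 1 := by
    rw [← hnormal]
    apply Finset.sum_congr rfl
    intro i _
    rw [hWapp]
    simp [hvinit]
    ring
  have hhanti : AntitoneOn (fun t => ∑ i, η i * W t i) (Set.Ici (0:ℝ)) := by
    apply antitoneOn_of_deriv_nonpos (convex_Ici 0)
    · intro s hs; exact ((hhder s hs).continuousAt).continuousWithinAt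
    · intro s hs
      rw [interior_Ici] at hs
      exact ((hhder s (Set.mem_Ioi.mp hs).le).differentiableAt).differentiableWithinAt
    · intro s hs
      rw [interior_Ici] at hs
      rw [(hhder s (Set.mem_Ioi.mp hs).le).deriv]
      have : 0 ≤ ∑ i, η i * F s i :=
        Finset.sum_nonneg fun i _ => mul_nonneg (hηpos i).le (hFnn s i)
      nlinarith
  have hhle1 : ∀ t ∈ Set.Ici (0:ℝ), (∑ i, η i * W t i) ≤ 1 := by
    intro t ht
    have h2 := hhanti Set.self_mem_Ici ht ht
    beta_reduce at h2
    rwa [hh0] at h2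
  have hhnn : ∀ t ∈ Set.Ici (0:ℝ), 0 ≤ ∑ i, η i * W t i := fun t ht =>
    Finset.sum_nonneg fun i _ => mul_nonneg (hηpos i).le (hWnn t ht i)
  -- bound on W
  have hWub : ∀ t ∈ Set.Ici (0:ℝ), ∀ i, W t i ≤ 1 / ηm := by
    intro t ht i
    have h1 : η i * W t i ≤ ∑ j, η j * W t j :=
      Finset.single_le_sum (f := fun j => η j * W t j)
        (fun j _ => mul_nonneg (hηpos j).le (hWnn t ht j)) (Finset.mem_univ i)
    have h2 : ηm * W t i ≤ η i * W t i :=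
      mul_le_mul_of_nonneg_right (hηmle i) (hWnn t ht i)
    rw [le_div_iff₀ hηmpos]
    have := hhle1 t ht
    nlinarith
  have hWnorm : ∀ t ∈ Set.Ici (0:ℝ), ‖W t‖ ≤ 1 / ηm := by
    intro t ht
    rw [pi_norm_le_iff_of_nonneg (by positivity)]
    intro i
    rw [Real.norm_eq_abs, abs_le]
    constructor
    · have := hWnn t ht i
      have h2 : (0:ℝ) ≤ 1 / ηm := by positivity
      linarith
    · exact hWub t ht i
  -- bound on F
  have hq0nn : 0 ≤ ∑ i, η i * u 0 i := hqnn 0 Set.self_mem_Ici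
  have humax : ∀ t ∈ Set.Ici (0:ℝ), ∀ i, ηm * u t i ≤ ∑ j, η j * u t j := by
    intro t ht i
    have h1 : η i * u t i ≤ ∑ j, η j * u t j :=
      Finset.single_le_sum (f := fun j => η j * u t j)
        (fun j _ => mul_nonneg (hηpos j).le (hunonneg t ht j)) (Finset.mem_univ i)
    have h2 : ηm * u t i ≤ η i * u t i :=
      mul_le_mul_of_nonneg_right (hηmle i) (hunonneg t ht i)
    linarith
  have hWmax : ∀ t ∈ Set.Ici (0:ℝ), ∀ i, ηm * W t i ≤ 1 := by
    intro t ht i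
    have h1 : η i * W t i ≤ ∑ j, η j * W t j :=
      Finset.single_le_sum (f := fun j => η j * W t j)
        (fun j _ => mul_nonneg (hηpos j).le (hWnn t ht j)) (Finset.mem_univ i)
    have h2 : ηm * W t i ≤ η i * W t i :=
      mul_le_mul_of_nonneg_right (hηmle i) (hWnn t ht i)
    have h3 := hhle1 t ht
    linarith
  have hFb : ∀ t ∈ Set.Ici (0:ℝ),
      ‖F t‖ ≤ ((∑ i, η i * u 0 i) / (ηm * ηm)) * Real.exp (μ * t) := by
    intro t ht
    have hMfnn : 0 ≤ ((∑ i, η i * u 0 i) / (ηm * ηm)) * Real.exp (μ * t) :=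
      mul_nonneg (div_nonneg hq0nn (by positivity)) (Real.exp_pos _).le
    rw [pi_norm_le_iff_of_nonneg hMfnn]
    intro i
    rw [Real.norm_eq_abs, abs_of_nonneg (hFnn t i)]
    have hFt : F t i = u t i * W t i := by
      rw [hFapp, max_eq_left (Set.mem_Ici.mp ht)]
    rw [hFt]
    have key : (ηm * u t i) * (ηm * W t i) ≤ (∑ j, η j * u t j) * 1 :=
      mul_le_mul (humax t ht i) (hWmax t ht i)
        (mul_nonneg hηmpos.le (hWnn t ht i)) (hqnn t ht)
    have hq := hqb t ht
    rw [div_mul_eq_mul_div, le_div_iff₀ (by positivity : (0:ℝ) < ηm * ηm)]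
    nlinarith
  -- lower bound on h via an integrating factor
  have hψle : ∀ t ∈ Set.Ici (0:ℝ), (∑ i, η i * F t i)
      ≤ ((∑ i, η i * u 0 i) / ηm) * Real.exp (μ * t) * (∑ i, η i * W t i) := by
    intro t ht
    have s1 : (∑ i, η i * F t i) ≤ (∑ j, η j * u t j) * (∑ i, W t i) := by
      rw [Finset.mul_sum]
      apply Finset.sum_le_sum
      intro i _
      have hFt : F t i = u t i * W t i := by rw [hFapp, max_eq_left (Set.mem_Ici.mp ht)]
      rw [hFt]
      have h1 : η i * u t i ≤ ∑ j, η j * u t j :=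
        Finset.single_le_sum (f := fun j => η j * u t j)
          (fun j _ => mul_nonneg (hηpos j).le (hunonneg t ht j)) (Finset.mem_univ i)
      have := hWnn t ht i
      nlinarith
    have s2 : ηm * (∑ i, W t i) ≤ ∑ i, η i * W t i := by
      rw [Finset.mul_sum]
      apply Finset.sum_le_sum
      intro i _
      exact mul_le_mul_of_nonneg_right (hηmle i) (hWnn t ht i)
    have s5 : ηm * (∑ i, η i * F t i)
        ≤ (∑ j, η j * u t j) * (∑ i, η i * W t i) := by
      have a1 : ηm * (∑ i, η i * F t i) ≤ ηm * ((∑ j, η j * u t j) * (∑ i, W t i)) :=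
        mul_le_mul_of_nonneg_left s1 hηmpos.le
      have a2 : (∑ j, η j * u t j) * (ηm * (∑ i, W t i))
          ≤ (∑ j, η j * u t j) * (∑ i, η i * W t i) :=
        mul_le_mul_of_nonneg_left s2 (hqnn t ht)
      nlinarith
    have s6 : (∑ j, η j * u t j) * (∑ i, η i * W t i)
        ≤ ((∑ i, η i * u 0 i) * Real.exp (μ * t)) * (∑ i, η i * W t i) :=
      mul_le_mul_of_nonneg_right (hqb t ht) (hhnn t ht)
    rw [div_mul_eq_mul_div, div_mul_eq_mul_div, le_div_iff₀ hηmpos]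
    nlinarith
  -- the auxiliary monotone function G2
  have hφder : ∀ t : ℝ, HasDerivAt
      (fun x => (c * ((∑ i, η i * u 0 i) / ηm) / μ) * (Real.exp (μ * x) - 1))
      (c * ((∑ i, η i * u 0 i) / ηm) * Real.exp (μ * t)) t := by
    intro t
    have h1 := (((Real.hasDerivAt_exp (μ * t)).comp t
      ((hasDerivAt_id t).const_mul μ)).sub_const 1).const_mul
      (c * ((∑ i, η i * u 0 i) / ηm) / μ)
    refine h1.congr_deriv ?_
    field_simp [ne_of_gt hηmpos, ne_of_lt hμ]
  have hG2der : ∀ t ∈ Set.Ici (0:ℝ), HasDerivAt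
      (fun x => (∑ i, η i * W x i)
        * Real.exp ((c * ((∑ i, η i * u 0 i) / ηm) / μ) * (Real.exp (μ * x) - 1)))
      ((-(c * ∑ i, η i * F t i))
          * Real.exp ((c * ((∑ i, η i * u 0 i) / ηm) / μ) * (Real.exp (μ * t) - 1))
        + (∑ i, η i * W t i)
          * (Real.exp ((c * ((∑ i, η i * u 0 i) / ηm) / μ) * (Real.exp (μ * t) - 1))
            * (c * ((∑ i, η i * u 0 i) / ηm) * Real.exp (μ * t)))) t := by
    intro t ht
    have hexpφ : HasDerivAt
        (fun x => Real.exp ((c * ((∑ i, η i * u 0 i) / ηm) / μ) * (Real.exp (μ * x) - 1)))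
        (Real.exp ((c * ((∑ i, η i * u 0 i) / ηm) / μ) * (Real.exp (μ * t) - 1))
          * (c * ((∑ i, η i * u 0 i) / ηm) * Real.exp (μ * t))) t :=
      (Real.hasDerivAt_exp _).comp t (hφder t)
    exact (hhder t ht).mul hexpφ
  have hG2mono : MonotoneOn
      (fun x => (∑ i, η i * W x i)
        * Real.exp ((c * ((∑ i, η i * u 0 i) / ηm) / μ) * (Real.exp (μ * x) - 1)))
      (Set.Ici (0:ℝ)) := by
    apply monotoneOn_of_deriv_nonneg (convex_Ici 0)
    · intro s hs; exact ((hG2der s hs).continuousAt).continuousWithinAt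
    · intro s hs
      rw [interior_Ici] at hs
      exact ((hG2der s (Set.mem_Ioi.mp hs).le).differentiableAt).differentiableWithinAt
    · intro s hs
      rw [interior_Ici] at hs
      rw [(hG2der s (Set.mem_Ioi.mp hs).le).deriv]
      have h1 := hψle s (Set.mem_Ioi.mp hs).le
      have h2 := Real.exp_pos
        ((c * ((∑ i, η i * u 0 i) / ηm) / μ) * (Real.exp (μ * s) - 1))
      have h3 : c * (∑ i, η i * F s i)
          ≤ c * (((∑ i, η i * u 0 i) / ηm) * Real.exp (μ * s) * (∑ i, η i * W s i)) :=
        mul_le_mul_of_nonneg_left h1 hc.le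
      nlinarith
  have hhlb : ∀ t ∈ Set.Ici (0:ℝ),
      Real.exp (c * ((∑ i, η i * u 0 i) / ηm) / μ) ≤ ∑ i, η i * W t i := by
    intro t ht
    have h1 := hG2mono Set.self_mem_Ici ht ht
    beta_reduce at h1
    rw [hh0] at h1
    simp only [mul_zero, Real.exp_zero, sub_self, one_mul] at h1
    -- h1 : 1 ≤ (∑ η W t) * exp (φ t)
    set a : ℝ := c * ((∑ i, η i * u 0 i) / ηm) / μ with hadef
    have ha : a ≤ 0 := by
      apply div_nonpos_of_nonneg_of_nonpos
      · exact mul_nonneg hc.le (div_nonneg hq0nn hηmpos.le)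
      · exact hμ.le
    have hE1 : Real.exp (μ * t) ≤ 1 := by
      rw [show (1:ℝ) = Real.exp 0 by simp]
      apply Real.exp_le_exp.mpr
      have := Set.mem_Ici.mp ht
      nlinarith
    have hφle : a * (Real.exp (μ * t) - 1) ≤ -a := by
      nlinarith [Real.exp_pos (μ * t)]
    have e1 : Real.exp (a * (Real.exp (μ * t) - 1)) ≤ Real.exp (-a) :=
      Real.exp_le_exp.mpr hφle
    have hsum_nn := hhnn t ht
    have e2 : Real.exp a * Real.exp (-a) = 1 := by
      rw [← Real.exp_add]; simp
    nlinarith [Real.exp_pos (-a), Real.exp_pos (a * (Real.exp (μ * t) - 1)),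
      mul_le_mul_of_nonneg_left e1 hsum_nn]
  -- the limit κ
  have hanti2 : Antitone (fun t => ∑ i, η i * W (max t 0) i) := by
    intro s t hst
    exact hhanti (le_max_right s 0) (le_max_right t 0) (max_le_max hst le_rfl)
  have hbdd : BddBelow (Set.range fun t => ∑ i, η i * W (max t 0) i) := by
    refine ⟨Real.exp (c * ((∑ i, η i * u 0 i) / ηm) / μ), ?_⟩
    rintro x ⟨t, rfl⟩
    exact hhlb _ (le_max_right t 0)
  have hκlim := tendsto_atTop_ciInf hanti2 hbdd
  set κ : ℝ := ⨅ t : ℝ, ∑ i, η i * W (max t 0) i with hκdef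
  have hκge : Real.exp (c * ((∑ i, η i * u 0 i) / ηm) / μ) ≤ κ :=
    le_ciInf (fun t => hhlb _ (le_max_right t 0))
  have hκpos : 0 < κ := lt_of_lt_of_le (Real.exp_pos _) hκge
  have hhtends : Tendsto (fun t => ∑ i, η i * W t i) atTop (𝓝 κ) := by
    apply hκlim.congr'
    filter_upwards [eventually_ge_atTop (0:ℝ)] with t ht
    rw [max_eq_left (Set.mem_Ici.mp ht)]
  refine ⟨κ, hκpos, ?_⟩
  exact Stmt10Aux.conv_main B P ξ hconv c (1/ηm) ((∑ i, η i * u 0 i)/(ηm*ηm)) μ κ hc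
    (by positivity) (div_nonneg hq0nn (by positivity)) hμ W F
    (fun t => ∑ i, η i * W t i) hWder hFc hFb hWnorm hPW hhtends
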